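/- The twixing functor δ* : tC → mC, (X,Φ) ↦ (X,X,Φ,Φ), factors as the composition of an equivalence of categories α : tC → mC[tdd] with the forgetful functor mC[tdd] → mC, where mC[tdd] is the category of mixed objects equipped with a twisted descent datum. In particular, a mixed object X̃ descends to a twisted object if and only if it admits an endomorphism f with τ*(f) ∘ f = id_{X̃}. -/

import Mathlib

open CategoryTheory CategoryTheory.Limits

universe v u

variable {C : Type u} [Category.{v} C]

/-- The twisted category `tC` attached to a category `C` with an endomorphism `F` of the
identity functor: objects are pairs `(X, Φ)` with `Φ ≫ Φ = F.app X`. -/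
structure Twisted (C : Type u) [Category.{v} C] (F : 𝟭 C ⟶ 𝟭 C) where
  X : C
  tw : X ⟶ X
  tw_tw : tw ≫ tw = F.app X

namespace Twisted

variable {F : 𝟭 C ⟶ 𝟭 C}

instance : Category (Twisted C F) where
  Hom A B := { f : A.X ⟶ B.X // A.tw ≫ f = f ≫ B.tw }
  id A := ⟨𝟙 A.X, by simp⟩
  comp {A B D} f g := ⟨f.1 ≫ g.1, by
    rw [← Category.assoc, f.2, Category.assoc, g.2, ← Category.assoc]⟩
  id_comp f := Subtype.ext (Category.id_comp _)
  comp_id f := Subtype.ext (Category.comp_id _)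
  assoc f g h := Subtype.ext (Category.assoc _ _ _)

end Twisted

/-- The mixed category `mC`: objects are quadruples `(X₁, X₂, φ₁, φ₂)` with
`φ₁ ≫ φ₂ = F.app X₁` and `φ₂ ≫ φ₁ = F.app X₂`. -/
structure Mixed (C : Type u) [Category.{v} C] (F : 𝟭 C ⟶ 𝟭 C) where
  X₁ : C
  X₂ : C
  φ₁ : X₁ ⟶ X₂
  φ₂ : X₂ ⟶ X₁
  h₁ : φ₁ ≫ φ₂ = F.app X₁
  h₂ : φ₂ ≫ φ₁ = F.app X₂

namespace Mixed

variable {F : 𝟭 C ⟶ 𝟭 C}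

instance : Category (Mixed C F) where
  Hom A B := { p : (A.X₁ ⟶ B.X₁) × (A.X₂ ⟶ B.X₂) //
      A.φ₁ ≫ p.2 = p.1 ≫ B.φ₁ ∧ A.φ₂ ≫ p.1 = p.2 ≫ B.φ₂ }
  id A := ⟨(𝟙 _, 𝟙 _), by simp⟩
  comp {A B D} f g := ⟨(f.1.1 ≫ g.1.1, f.1.2 ≫ g.1.2), by
    constructor
    · rw [← Category.assoc, f.2.1, Category.assoc, g.2.1, ← Category.assoc]
    · rw [← Category.assoc, f.2.2, Category.assoc, g.2.2, ← Category.assoc]⟩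
  id_comp f := Subtype.ext (Prod.ext_iff.mpr ⟨Category.id_comp _, Category.id_comp _⟩)
  comp_id f := Subtype.ext (Prod.ext_iff.mpr ⟨Category.comp_id _, Category.comp_id _⟩)
  assoc f g h := Subtype.ext (Prod.ext_iff.mpr ⟨Category.assoc _ _ _, Category.assoc _ _ _⟩)

end Mixed

/-- The first component functor `comp₁ : mC ⥤ C`. -/
def comp₁ (F : 𝟭 C ⟶ 𝟭 C) : Mixed C F ⥤ C where
  obj A := A.X₁
  map f := f.1.1
  map_id _ := rfl
  map_comp _ _ := rfl

/-- The second component functor `comp₂ : mC ⥤ C`. -/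
def comp₂ (F : 𝟭 C ⟶ 𝟭 C) : Mixed C F ⥤ C where
  obj A := A.X₂
  map f := f.1.2
  map_id _ := rfl
  map_comp _ _ := rfl

/-- The mixing functor `m : C ⥤ mC`, `X ↦ (X, X, F_X, id_X)`. -/
def mixM (F : 𝟭 C ⟶ 𝟭 C) : C ⥤ Mixed C F where
  obj X := ⟨X, X, F.app X, 𝟙 X, by simp, by simp⟩
  map {X Y} f := ⟨(f, f), by
    constructor
    · simpa using (F.naturality f).symm
    · simp⟩
  map_id _ := rfl
  map_comp _ _ := rfl

/-- The anti-mixing functor `m̄ : C ⥤ mC`, `X ↦ (X, X, id_X, F_X)`. -/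
def mixMbar (F : 𝟭 C ⟶ 𝟭 C) : C ⥤ Mixed C F where
  obj X := ⟨X, X, 𝟙 X, F.app X, by simp, by simp⟩
  map {X Y} f := ⟨(f, f), by
    constructor
    · simp
    · simpa using (F.naturality f).symm⟩
  map_id _ := rfl
  map_comp _ _ := rfl

/-- The twisting functor `τ* : mC ⥤ mC`, swapping the two halves of a mixed object. -/
def tau (F : 𝟭 C ⟶ 𝟭 C) : Mixed C F ⥤ Mixed C F where
  obj A := ⟨A.X₂, A.X₁, A.φ₂, A.φ₁, A.h₂, A.h₁⟩
  map f := ⟨(f.1.2, f.1.1), ⟨f.2.2, f.2.1⟩⟩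
  map_id _ := rfl
  map_comp _ _ := rfl

/-- The twixing functor `δ* : tC ⥤ mC`, `(X, Φ) ↦ (X, X, Φ, Φ)`. -/
def deltaStar (F : 𝟭 C ⟶ 𝟭 C) : Twisted C F ⥤ Mixed C F where
  obj A := ⟨A.X, A.X, A.tw, A.tw, A.tw_tw, A.tw_tw⟩
  map f := ⟨(f.1, f.1), ⟨f.2, f.2⟩⟩
  map_id _ := rfl
  map_comp _ _ := rfl

/-- The category `mC[tdd]` of mixed objects equipped with a twisted descent datum. -/
structure Tdd (C : Type u) [Category.{v} C] (F : 𝟭 C ⟶ 𝟭 C) where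
  A : Mixed C F
  d : A ⟶ (tau F).obj A
  hd : d ≫ (tau F).map d = 𝟙 A

namespace Tdd

variable {C : Type u} [Category.{v} C] {F : 𝟭 C ⟶ 𝟭 C}

instance : Category (Tdd C F) where
  Hom A B := { u : A.A ⟶ B.A // A.d ≫ (tau F).map u = u ≫ B.d }
  id A := ⟨𝟙 A.A, by simp⟩
  comp {A B D} f g := ⟨f.1 ≫ g.1, by
    rw [Functor.map_comp, ← Category.assoc, f.2, Category.assoc, g.2, ← Category.assoc]⟩
  id_comp f := Subtype.ext (Category.id_comp _)
  comp_id f := Subtype.ext (Category.comp_id _)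
  assoc f g h := Subtype.ext (Category.assoc _ _ _)

end Tdd

/-- The forgetful functor `mC[tdd] ⥤ mC`. -/
def tddForget (C : Type u) [Category.{v} C] (F : 𝟭 C ⟶ 𝟭 C) : Tdd C F ⥤ Mixed C F where
  obj A := A.A
  map u := u.1
  map_id _ := rfl
  map_comp _ _ := rfl


section Aux

variable {C : Type u} [Category.{v} C] {F : 𝟭 C ⟶ 𝟭 C}

lemma Mixed.hom_ext {A B : Mixed C F} {f g : A ⟶ B}
    (h1 : f.1.1 = g.1.1) (h2 : f.1.2 = g.1.2) : f = g :=
  Subtype.ext (Prod.ext h1 h2)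

lemma Tdd.hom_ext' {A B : Tdd C F} {f g : A ⟶ B} (h : f.1 = g.1) : f = g :=
  Subtype.ext h

@[simp] lemma Mixed.comp_fst {A B D : Mixed C F} (f : A ⟶ B) (g : B ⟶ D) :
    (f ≫ g).1.1 = f.1.1 ≫ g.1.1 := rfl

@[simp] lemma Mixed.comp_snd {A B D : Mixed C F} (f : A ⟶ B) (g : B ⟶ D) :
    (f ≫ g).1.2 = f.1.2 ≫ g.1.2 := rfl

@[simp] lemma Mixed.id_fst (A : Mixed C F) : (𝟙 A : A ⟶ A).1.1 = 𝟙 A.X₁ := rfl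

@[simp] lemma Mixed.id_snd (A : Mixed C F) : (𝟙 A : A ⟶ A).1.2 = 𝟙 A.X₂ := rfl

@[simp] lemma tau_map_fst {A B : Mixed C F} (f : A ⟶ B) :
    ((tau F).map f).1.1 = f.1.2 := rfl

@[simp] lemma tau_map_snd {A B : Mixed C F} (f : A ⟶ B) :
    ((tau F).map f).1.2 = f.1.1 := rfl

lemma id_comp_eq_comp_id' {X Y : C} {f g : X ⟶ Y} (h : 𝟙 X ≫ f = g ≫ 𝟙 Y) : g = f := by
  simpa using h.symm

lemma cancel_mid' {X Y Z : C} {a : X ⟶ Y} {b : Y ⟶ Z} {c : Z ⟶ Y} {d : Y ⟶ X}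
    (h1 : b ≫ c = 𝟙 Y) (h2 : a ≫ d = 𝟙 X) : (a ≫ b) ≫ c ≫ d = 𝟙 X := by
  rw [Category.assoc, ← Category.assoc b, h1, Category.id_comp, h2]

/-- The functor `α : tC ⥤ mC[tdd]`. -/
def alphaFun (F : 𝟭 C ⟶ 𝟭 C) : Twisted C F ⥤ Tdd C F where
  obj T := ⟨(deltaStar F).obj T, ⟨(𝟙 T.X, 𝟙 T.X), by
      constructor
      · show T.tw ≫ 𝟙 T.X = 𝟙 T.X ≫ T.tw; simp
      · show T.tw ≫ 𝟙 T.X = 𝟙 T.X ≫ T.tw; simp⟩,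
    Mixed.hom_ext (show 𝟙 T.X ≫ 𝟙 T.X = 𝟙 T.X by simp)
      (show 𝟙 T.X ≫ 𝟙 T.X = 𝟙 T.X by simp)⟩
  map {T T'} f := ⟨(deltaStar F).map f, Mixed.hom_ext
    (show 𝟙 T.X ≫ f.1 = f.1 ≫ 𝟙 T'.X by simp)
    (show 𝟙 T.X ≫ f.1 = f.1 ≫ 𝟙 T'.X by simp)⟩
  map_id _ := rfl
  map_comp _ _ := rfl

lemma tw_aux1 {X Y : C} {a : X ⟶ Y} {b : Y ⟶ X} {p : X ⟶ Y} {q : Y ⟶ X}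
    (h1 : a ≫ b = 𝟙 X) (h2 : q ≫ a = b ≫ p) : (a ≫ q) ≫ (a ≫ q) = p ≫ q := by
  rw [Category.assoc, ← Category.assoc q, h2, Category.assoc, ← Category.assoc,
    ← Category.assoc, h1, Category.id_comp]

lemma tw_aux2 {X Y : C} {a : X ⟶ Y} {b : Y ⟶ X} {p : X ⟶ Y} {q : Y ⟶ X}
    (h1 : a ≫ b = 𝟙 X) (h2 : q ≫ a = b ≫ p) : (a ≫ q) ≫ a = 𝟙 X ≫ p := by
  rw [Category.assoc, h2, ← Category.assoc, h1]

lemma tw_aux3 {X Y : C} {a : X ⟶ Y} {b : Y ⟶ X} {q : Y ⟶ X}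
    (h : b ≫ a = 𝟙 Y) : q ≫ 𝟙 X = b ≫ (a ≫ q) := by
  rw [Category.comp_id, ← Category.assoc, h, Category.id_comp]

/-- Given a twisted descent datum, the underlying twisted object. -/
def descendObj (A : Mixed C F) (f : A ⟶ (tau F).obj A) (hf : f ≫ (tau F).map f = 𝟙 A) :
    Twisted C F where
  X := A.X₁
  tw := f.1.1 ≫ A.φ₂
  tw_tw := by
    have h1 : f.1.1 ≫ f.1.2 = 𝟙 A.X₁ := congrArg (fun p => p.1.1) hf
    have h2 : A.φ₂ ≫ f.1.1 = f.1.2 ≫ A.φ₁ := f.2.2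
    exact (tw_aux1 h1 h2).trans A.h₁

lemma descend_d11_d12 (A : Mixed C F) (f : A ⟶ (tau F).obj A)
    (hf : f ≫ (tau F).map f = 𝟙 A) : f.1.1 ≫ f.1.2 = 𝟙 A.X₁ :=
  congrArg (fun p => p.1.1) hf

lemma descend_d12_d11 (A : Mixed C F) (f : A ⟶ (tau F).obj A)
    (hf : f ≫ (tau F).map f = 𝟙 A) : f.1.2 ≫ f.1.1 = 𝟙 A.X₂ :=
  congrArg (fun p => p.1.2) hf

/-- The isomorphism `δ*(descendObj) ≅ A` in `mC`. -/
def descendIso (A : Mixed C F) (f : A ⟶ (tau F).obj A) (hf : f ≫ (tau F).map f = 𝟙 A) :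
    (deltaStar F).obj (descendObj A f hf) ≅ A where
  hom := ⟨(𝟙 A.X₁, f.1.1), by
    constructor
    · show (f.1.1 ≫ A.φ₂) ≫ f.1.1 = 𝟙 A.X₁ ≫ A.φ₁
      have h2 : A.φ₂ ≫ f.1.1 = f.1.2 ≫ A.φ₁ := f.2.2
      exact tw_aux2 (descend_d11_d12 A f hf) h2
    · show (f.1.1 ≫ A.φ₂) ≫ 𝟙 A.X₁ = f.1.1 ≫ A.φ₂
      simp⟩
  inv := ⟨(𝟙 A.X₁, f.1.2), by
    constructor
    · show A.φ₁ ≫ f.1.2 = 𝟙 A.X₁ ≫ (f.1.1 ≫ A.φ₂)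
      have h1 : A.φ₁ ≫ f.1.2 = f.1.1 ≫ A.φ₂ := f.2.1
      rw [Category.id_comp, h1]
    · show A.φ₂ ≫ 𝟙 A.X₁ = f.1.2 ≫ (f.1.1 ≫ A.φ₂)
      exact tw_aux3 (descend_d12_d11 A f hf)⟩
  hom_inv_id := Mixed.hom_ext (show 𝟙 A.X₁ ≫ 𝟙 A.X₁ = 𝟙 A.X₁ by simp)
    (show f.1.1 ≫ f.1.2 = 𝟙 A.X₁ from descend_d11_d12 A f hf)
  inv_hom_id := Mixed.hom_ext (show 𝟙 A.X₁ ≫ 𝟙 A.X₁ = 𝟙 A.X₁ by simp)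
    (show f.1.2 ≫ f.1.1 = 𝟙 A.X₂ from descend_d12_d11 A f hf)

end Aux

/-- The twixing functor `δ* : tC ⥤ mC` factors as an equivalence
`α : tC ⥤ mC[tdd]` followed by the forgetful functor `mC[tdd] ⥤ mC`.  In particular, a mixed
object descends to a twisted object if and only if it admits a twisted descent datum. -/
theorem deltaStar_factorization {C : Type u} [Category.{v} C] (F : 𝟭 C ⟶ 𝟭 C) :
    (∃ α : Twisted C F ⥤ Tdd C F, α.IsEquivalence ∧ α ⋙ tddForget C F = deltaStar F) ∧
    (∀ A : Mixed C F,
      (∃ T : Twisted C F, Nonempty ((deltaStar F).obj T ≅ A)) ↔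
        ∃ f : A ⟶ (tau F).obj A, f ≫ (tau F).map f = 𝟙 A) := by
  constructor
  · refine ⟨alphaFun F, ?_, rfl⟩
    have hfaithful : (alphaFun F).Faithful := by
      constructor
      intro T T' u v h
      exact Subtype.ext (congrArg (fun w => w.1.1.1) h)
    have hfull : (alphaFun F).Full := by
      constructor
      intro T T' u
      have h12 : u.1.1.2 = u.1.1.1 := by
        have h := congrArg (fun w => w.1.2) u.2
        simp only [Mixed.comp_snd, tau_map_snd] at h
        exact id_comp_eq_comp_id' (show 𝟙 T.X ≫ u.1.1.1 = u.1.1.2 ≫ 𝟙 T'.X from h)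
      refine ⟨⟨u.1.1.1, ?_⟩, ?_⟩
      · have h : T.tw ≫ u.1.1.2 = u.1.1.1 ≫ T'.tw := u.1.2.1
        rw [h12] at h
        exact h
      · apply Tdd.hom_ext'
        exact Mixed.hom_ext rfl h12.symm
    have hess : (alphaFun F).EssSurj := by
      constructor
      intro B
      refine ⟨descendObj B.A B.d B.hd, ⟨?_⟩⟩
      refine ⟨⟨(descendIso B.A B.d B.hd).hom, ?_⟩, ⟨(descendIso B.A B.d B.hd).inv, ?_⟩, ?_, ?_⟩
      · apply Mixed.hom_ext
        · rfl
        · show 𝟙 B.A.X₁ ≫ 𝟙 B.A.X₁ = B.d.1.1 ≫ B.d.1.2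
          rw [show B.d.1.1 ≫ B.d.1.2 = 𝟙 B.A.X₁ from descend_d11_d12 B.A B.d B.hd]
          simp
      · apply Mixed.hom_ext
        · show B.d.1.1 ≫ B.d.1.2 = 𝟙 B.A.X₁ ≫ 𝟙 B.A.X₁
          rw [show B.d.1.1 ≫ B.d.1.2 = 𝟙 B.A.X₁ from descend_d11_d12 B.A B.d B.hd]
          simp
          rfl
        · rfl
      · exact Tdd.hom_ext' (descendIso B.A B.d B.hd).hom_inv_id
      · exact Tdd.hom_ext' (descendIso B.A B.d B.hd).inv_hom_id
    exact { faithful := hfaithful, full := hfull, essSurj := hess }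
  · intro A
    constructor
    · rintro ⟨T, ⟨e⟩⟩
      refine ⟨e.inv ≫ (tau F).map e.hom, ?_⟩
      have h1 : e.hom.1.1 ≫ e.inv.1.1 = 𝟙 T.X :=
        congrArg (fun w => w.1.1) e.hom_inv_id
      have h3 : e.hom.1.2 ≫ e.inv.1.2 = 𝟙 T.X :=
        congrArg (fun w => w.1.2) e.hom_inv_id
      have h4 : e.inv.1.1 ≫ e.hom.1.1 = 𝟙 A.X₁ :=
        congrArg (fun w => w.1.1) e.inv_hom_id
      have h2 : e.inv.1.2 ≫ e.hom.1.2 = 𝟙 A.X₂ :=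
        congrArg (fun w => w.1.2) e.inv_hom_id
      apply Mixed.hom_ext
      · simp only [Mixed.comp_fst, Mixed.comp_snd, tau_map_fst, tau_map_snd, Mixed.id_fst]
        exact cancel_mid' h3 h4
      · simp only [Mixed.comp_fst, Mixed.comp_snd, tau_map_fst, tau_map_snd, Mixed.id_snd]
        exact cancel_mid' h1 h2
    · rintro ⟨f, hf⟩
      exact ⟨descendObj A f hf, ⟨descendIso A f hf⟩⟩
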